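/- Fix a real number β > -1. Let (M(n))_{n≥2} be a process adapted to a filtration (𝓕_n) on a probability space, taking values in the integers ≥ 2, such that for every n ≥ 2, almost surely M(n+1) − M(n) ∈ {0,1} and P( M(n+1) = M(n)+1 | 𝓕_n ) ≥ M(n)/(2(2+β)n). Then, with γ = 1/(4(2+β)), almost surely inf_{n≥2} M(n)/n^γ > 0. -/

import Mathlib

open MeasureTheory Filter Topology

lemma telescope_aux (n : ℕ) :
    ∏ k ∈ Finset.Ico 2 (n + 2), ((k : ℝ) / ((k : ℝ) + 1)) = 2 / ((n : ℝ) + 2) := by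
  induction n with
  | zero => norm_num [Finset.Ico_self]
  | succ n ih =>
    rw [show n + 1 + 2 = (n + 2) + 1 from rfl,
      Finset.prod_Ico_succ_top (by omega : 2 ≤ n + 2), ih]
    have h2 : ((n : ℝ) + 2) ≠ 0 := by positivity
    have h3 : ((n : ℝ) + 3) ≠ 0 := by positivity
    push_cast
    field_simp
    ring

lemma factor_aux {a x : ℝ} (ha0 : 0 ≤ a) (ha1 : a ≤ 1) (hx : 2 ≤ x) :
    1 - a / x ≤ (x / (x + 1)) ^ a := by
  have hx0 : 0 < x := by linarith
  have hx1 : 0 < x + 1 := by linarith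
  have hs : (0 : ℝ) ≤ 1 / x := by positivity
  have hber : (1 + 1 / x) ^ a ≤ 1 + a * (1 / x) :=
    rpow_one_add_le_one_add_mul_self (by linarith) ha0 ha1
  have hkey : x / (x + 1) = (1 + 1 / x)⁻¹ := by field_simp
  rw [hkey, Real.inv_rpow (by positivity)]
  have hpos : 0 < (1 + 1 / x) ^ a := Real.rpow_pos_of_pos (by positivity) a
  have h1 : 1 - a / x ≤ (1 + a * (1 / x))⁻¹ := by
    rw [← one_div, le_div_iff₀ (by positivity)]
    have h2 : a / x * (a * (1 / x)) ≥ 0 := by positivity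
    have h3 : a * (1 / x) = a / x := by ring
    nlinarith [h2, h3]
  refine h1.trans ?_
  exact inv_anti₀ hpos hber

lemma prod_bound_aux {a : ℝ} (ha0 : 0 ≤ a) (ha1 : a ≤ 1) (n : ℕ) :
    ∏ k ∈ Finset.Ico 2 (n + 2), (1 - a / (k : ℝ)) ≤ (2 / ((n : ℝ) + 2)) ^ a := by
  rw [← telescope_aux n,
    ← Real.finset_prod_rpow _ _ (fun k _ => by positivity) a]
  apply Finset.prod_le_prod
  · intro k hk
    have h2k : (2 : ℝ) ≤ (k : ℝ) := by
      exact_mod_cast (Finset.mem_Ico.mp hk).1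
    have : a / (k : ℝ) ≤ 1 / 2 := div_le_div₀ zero_le_one ha1 two_pos h2k
    linarith
  · intro k hk
    have h2k : (2 : ℝ) ≤ (k : ℝ) := by
      exact_mod_cast (Finset.mem_Ico.mp hk).1
    exact factor_aux ha0 ha1 h2k

lemma comp_meas {Ω : Type*} {m : MeasurableSpace Ω} {f : Ω → ℕ}
    (hf : Measurable[m] f) (g : ℕ → ℝ) : Measurable[m] fun ω => g (f ω) :=
  (measurable_from_top (f := g)).comp hf

lemma arith_aux {a C x N q : ℝ} (haC : a * C = 2 / 3)
    (hx : 2 ≤ x) (hN : 2 ≤ N) (hC : 0 < C) (ha0 : 0 < a)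
    (hq : x / (C * N) ≤ q) :
    x⁻¹ - (x * (x + 1))⁻¹ * q ≤ (1 - a / N) * x⁻¹ := by
  have hx0 : (0 : ℝ) < x := by linarith
  have hx1 : (0 : ℝ) < x + 1 := by linarith
  have hN0 : (0 : ℝ) < N := by linarith
  have key : a / N * x⁻¹ ≤ (x * (x + 1))⁻¹ * q := by
    have h1 : a / N * x⁻¹ = a / (N * x) := by field_simp
    have h2 : (x * (x + 1))⁻¹ * (x / (C * N)) = 1 / (C * N * (x + 1)) := by
      field_simp
    have h3 : a / (N * x) ≤ 1 / (C * N * (x + 1)) := by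
      rw [div_le_div_iff₀ (by positivity) (by positivity)]
      calc a * (C * N * (x + 1)) = a * C * (N * (x + 1)) := by ring
        _ = 2 / 3 * (N * (x + 1)) := by rw [haC]
        _ ≤ N * x := by nlinarith [mul_nonneg hN0.le (by linarith : (0:ℝ) ≤ x - 2)]
        _ = 1 * (N * x) := (one_mul _).symm
    have h4 : (x * (x + 1))⁻¹ * (x / (C * N)) ≤ (x * (x + 1))⁻¹ * q :=
      mul_le_mul_of_nonneg_left hq (by positivity)
    calc a / N * x⁻¹ = a / (N * x) := h1
      _ ≤ 1 / (C * N * (x + 1)) := h3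
      _ = (x * (x + 1))⁻¹ * (x / (C * N)) := h2.symm
      _ ≤ (x * (x + 1))⁻¹ * q := h4
  have expand : (1 - a / N) * x⁻¹ = x⁻¹ - a / N * x⁻¹ := by ring
  linarith

set_option maxHeartbeats 1000000 in
theorem stmt7 {Ω : Type*} {m0 : MeasurableSpace Ω} {μ : Measure Ω}
    [IsProbabilityMeasure μ] (𝓕 : Filtration ℕ m0)
    (β : ℝ) (hβ : -1 < β) (M : ℕ → Ω → ℕ)
    (hM : ∀ n, Measurable[𝓕 n] (M n))
    (hval : ∀ n : ℕ, 2 ≤ n → ∀ᵐ ω ∂μ,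
      2 ≤ M n ω ∧ (M (n + 1) ω = M n ω ∨ M (n + 1) ω = M n ω + 1))
    (hdyn : ∀ n : ℕ, 2 ≤ n →
      (fun ω => (M n ω : ℝ) / (2 * (2 + β) * n)) ≤ᵐ[μ]
        μ[Set.indicator {ω | M (n + 1) ω = M n ω + 1} (fun _ => (1 : ℝ)) | 𝓕 n]) :
    ∀ᵐ ω ∂μ,
      0 < ⨅ n : ℕ, (M (n + 2) ω : ℝ) / ((n : ℝ) + 2) ^ ((1 : ℝ) / (4 * (2 + β))) := by
  have hβ2 : (0 : ℝ) < 2 + β := by linarith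
  set C : ℝ := 2 * (2 + β) with hCdef
  have hC : 0 < C := by positivity
  set a : ℝ := 1 / (3 * (2 + β)) with hadef
  have ha0 : 0 < a := by positivity
  have ha1 : a ≤ 1 := by
    rw [hadef, div_le_one (by positivity)]; linarith
  have haC : a * C = 2 / 3 := by
    rw [hadef, hCdef]; field_simp
  set γ : ℝ := (1 : ℝ) / (4 * (2 + β)) with hγdef
  have hγ0 : 0 < γ := by positivity
  have hγa : γ < a := by
    rw [hγdef, hadef]
    apply div_lt_div_of_pos_left one_pos (by positivity)
    linarith
  -- the shifted filtration
  set 𝓖 : Filtration ℕ m0 :=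
    ⟨fun n => 𝓕 (n + 2), fun i j hij => 𝓕.mono (by omega), fun n => 𝓕.le _⟩ with h𝓖
  -- the discount factors
  set p : ℕ → ℝ := fun n => ∏ k ∈ Finset.Ico 2 (n + 2), (1 - a / (k : ℝ)) with hpdef
  have hfac : ∀ k : ℕ, 2 ≤ k → 0 < 1 - a / (k : ℝ) := by
    intro k hk
    have h2k : (2 : ℝ) ≤ (k : ℝ) := by exact_mod_cast hk
    have : a / (k : ℝ) ≤ 1 / 2 := div_le_div₀ zero_le_one ha1 two_pos h2k
    linarith
  have hp_pos : ∀ n, 0 < p n := by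
    intro n
    exact Finset.prod_pos fun k hk => hfac k (Finset.mem_Ico.mp hk).1
  have hp_succ : ∀ n, p (n + 1) = p n * (1 - a / ((n : ℝ) + 2)) := by
    intro n
    simp only [hpdef]
    rw [show n + 1 + 2 = (n + 2) + 1 from rfl,
      Finset.prod_Ico_succ_top (by omega : 2 ≤ n + 2)]
    push_cast
    ring
  -- the supermartingale
  set Z : ℕ → Ω → ℝ := fun n ω => (p n)⁻¹ * ((M (n + 2) ω : ℝ))⁻¹ with hZdef
  have hZmeas : ∀ n, Measurable[𝓕 (n + 2)] (Z n) := by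
    intro n
    exact (Measurable.comp (measurable_from_top (f := fun k : ℕ => ((k : ℝ))⁻¹))
      (hM (n + 2))).const_mul _
  have hinv01 : ∀ m : ℕ, (0 : ℝ) ≤ ((m : ℕ) : ℝ)⁻¹ ∧ ((m : ℕ) : ℝ)⁻¹ ≤ 1 := by
    intro m
    rcases Nat.eq_zero_or_pos m with rfl | hm
    · norm_num
    · have h1 : (1 : ℝ) ≤ (m : ℝ) := by exact_mod_cast hm
      exact ⟨by positivity, inv_le_one_of_one_le₀ h1⟩
  have hZnonneg : ∀ n ω, 0 ≤ Z n ω := by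
    intro n ω
    have h1 := (hinv01 (M (n + 2) ω)).1
    have h2 := (hp_pos n).le
    exact mul_nonneg (inv_nonneg.mpr h2) h1
  have hZint : ∀ n, Integrable (Z n) μ := by
    intro n
    refine (integrable_const ((p n)⁻¹)).mono'
      (((hZmeas n).mono (𝓕.le _) le_rfl).stronglyMeasurable.aestronglyMeasurable)
      (ae_of_all _ fun ω => ?_)
    rw [Real.norm_eq_abs, abs_of_nonneg (hZnonneg n ω)]
    have h1 := (hinv01 (M (n + 2) ω)).2
    have h2 := (hinv01 (M (n + 2) ω)).1
    have h3 : (0 : ℝ) ≤ (p n)⁻¹ := inv_nonneg.mpr (hp_pos n).le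
    calc (p n)⁻¹ * ((M (n + 2) ω : ℝ))⁻¹ ≤ (p n)⁻¹ * 1 :=
          mul_le_mul_of_nonneg_left h1 h3
      _ = (p n)⁻¹ := mul_one _
  -- key supermartingale step
  have hkey : ∀ n : ℕ, μ[Z (n + 1) | 𝓖 n] ≤ᵐ[μ] Z n := by
    intro n
    have hle : (𝓕 (n + 2) : MeasurableSpace Ω) ≤ m0 := 𝓕.le _
    set S : Set Ω := {ω | M (n + 2 + 1) ω = M (n + 2) ω + 1} with hSdef
    set I : Ω → ℝ := S.indicator (fun _ => (1 : ℝ)) with hIdef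
    set h : Ω → ℝ := fun ω => ((M (n + 2) ω : ℝ) * ((M (n + 2) ω : ℝ) + 1))⁻¹ with hhdef
    set f2 : Ω → ℝ := fun ω => ((M (n + 2) ω : ℝ))⁻¹ with hf2def
    set f3 : Ω → ℝ := fun ω => ((M (n + 2 + 1) ω : ℝ))⁻¹ with hf3def
    have hSmeas : MeasurableSet S := by
      apply measurableSet_eq_fun
      · exact (hM (n + 2 + 1)).mono (𝓕.le _) le_rfl
      · exact Measurable.comp (measurable_from_top (f := fun k : ℕ => k + 1))
          ((hM (n + 2)).mono (𝓕.le _) le_rfl)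
    have hImeas : Measurable I := measurable_const.indicator hSmeas
    have hIbd : ∀ ω, ‖I ω‖ ≤ 1 := by
      intro ω
      rw [Real.norm_eq_abs]
      by_cases hω : ω ∈ S
      · rw [hIdef, Set.indicator_of_mem hω]; norm_num
      · rw [hIdef, Set.indicator_of_notMem hω]; norm_num
    have hIint : Integrable I μ :=
      (integrable_const (1 : ℝ)).mono' hImeas.aestronglyMeasurable (ae_of_all _ hIbd)
    have hnat : ∀ m : ℕ, 0 ≤ ((m : ℝ) * ((m : ℝ) + 1))⁻¹ ∧ ((m : ℝ) * ((m : ℝ) + 1))⁻¹ ≤ 1 := by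
      intro m
      rcases Nat.eq_zero_or_pos m with rfl | hm
      · norm_num
      · have h1 : (1 : ℝ) ≤ (m : ℝ) := by exact_mod_cast hm
        constructor
        · positivity
        · apply inv_le_one_of_one_le₀; nlinarith
    have hhmeas : Measurable[𝓕 (n + 2)] h :=
      comp_meas (hM (n + 2)) (fun k : ℕ => ((k : ℝ) * ((k : ℝ) + 1))⁻¹)
    have hhbd : ∀ ω, ‖h ω‖ ≤ 1 := fun ω => by
      rw [Real.norm_eq_abs, abs_of_nonneg (hnat _).1]; exact (hnat _).2
    have hf2meas : Measurable[𝓕 (n + 2)] f2 :=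
      comp_meas (hM (n + 2)) (fun k : ℕ => ((k : ℝ))⁻¹)
    have hf3meas : Measurable f3 :=
      comp_meas ((hM (n + 2 + 1)).mono (𝓕.le _) le_rfl) (fun k : ℕ => ((k : ℝ))⁻¹)
    have hf2int : Integrable f2 μ :=
      (integrable_const (1 : ℝ)).mono'
        ((hf2meas.mono hle le_rfl)).aestronglyMeasurable
        (ae_of_all _ fun ω => by
          rw [Real.norm_eq_abs, abs_of_nonneg (hinv01 _).1]; exact (hinv01 _).2)
    have hf3int : Integrable f3 μ :=
      (integrable_const (1 : ℝ)).mono' hf3meas.aestronglyMeasurable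
        (ae_of_all _ fun ω => by
          rw [Real.norm_eq_abs, abs_of_nonneg (hinv01 _).1]; exact (hinv01 _).2)
    have hhIint : Integrable (h * I) μ :=
      (integrable_const (1 : ℝ)).mono'
        (((hhmeas.mono hle le_rfl)).mul hImeas).aestronglyMeasurable
        (ae_of_all _ fun ω => by
          rw [Pi.mul_apply, norm_mul]
          calc ‖h ω‖ * ‖I ω‖ ≤ 1 * 1 :=
                mul_le_mul (hhbd ω) (hIbd ω) (norm_nonneg _) zero_le_one
            _ = 1 := mul_one 1)
    -- pointwise identity
    have hid : f3 =ᵐ[μ] f2 - h * I := by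
      filter_upwards [hval (n + 2) (by omega)] with ω hω
      obtain ⟨h2, hcase⟩ := hω
      have hm2 : (2 : ℝ) ≤ (M (n + 2) ω : ℝ) := by exact_mod_cast h2
      have hm0 : (0 : ℝ) < (M (n + 2) ω : ℝ) := by linarith
      simp only [hf3def, hf2def, hhdef, hIdef, Pi.sub_apply, Pi.mul_apply]
      rcases hcase with hcase | hcase
      · have hI0 : S.indicator (fun _ => (1 : ℝ)) ω = 0 := by
          apply Set.indicator_of_notMem
          rw [hSdef]; simp only [Set.mem_setOf_eq]
          rw [hcase]; omega
        rw [hI0, mul_zero, sub_zero, hcase]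
      · have hI1 : S.indicator (fun _ => (1 : ℝ)) ω = 1 := by
          apply Set.indicator_of_mem
          rw [hSdef]; exact hcase
        rw [hI1, mul_one, hcase]
        push_cast
        have hne : (M (n + 2) ω : ℝ) ≠ 0 := ne_of_gt hm0
        have hne1 : (M (n + 2) ω : ℝ) + 1 ≠ 0 := by positivity
        field_simp
        ring
    -- conditional expectation computation
    have e1 : μ[f3 | 𝓕 (n + 2)] =ᵐ[μ] μ[f2 - h * I | 𝓕 (n + 2)] := condExp_congr_ae hid
    have e2 : μ[f2 - h * I | 𝓕 (n + 2)] =ᵐ[μ]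
        μ[f2 | 𝓕 (n + 2)] - μ[h * I | 𝓕 (n + 2)] := condExp_sub hf2int hhIint _
    have e3 : μ[f2 | 𝓕 (n + 2)] = f2 :=
      condExp_of_stronglyMeasurable hle hf2meas.stronglyMeasurable hf2int
    have e4 : μ[h * I | 𝓕 (n + 2)] =ᵐ[μ] h * μ[I | 𝓕 (n + 2)] :=
      condExp_mul_of_stronglyMeasurable_left hhmeas.stronglyMeasurable hhIint hIint
    have hd := hdyn (n + 2) (by omega)
    have hstep : μ[f3 | 𝓕 (n + 2)] ≤ᵐ[μ]
        fun ω => (1 - a / ((n : ℝ) + 2)) * f2 ω := by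
      filter_upwards [e1, e2, e4, hd, hval (n + 2) (by omega)] with ω h1 h2 h4 hdω hvω
      rw [h1, h2, Pi.sub_apply, congrFun e3 ω, h4, Pi.mul_apply]
      have hm2 : (2 : ℝ) ≤ (M (n + 2) ω : ℝ) := by exact_mod_cast hvω.1
      have hq : (M (n + 2) ω : ℝ) / (C * ((n : ℝ) + 2)) ≤ (μ[I | 𝓕 (n + 2)]) ω := by
        have := hdω
        push_cast at this
        exact this
      have hN2 : (2 : ℝ) ≤ (n : ℝ) + 2 := by linarith [Nat.cast_nonneg (α := ℝ) n]
      exact arith_aux haC hm2 hN2 hC ha0 hq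
    -- assemble
    have hZeq : Z (n + 1) = (p (n + 1))⁻¹ • f3 := by
      funext ω
      show (p (n + 1))⁻¹ * ((M (n + 1 + 2) ω : ℝ))⁻¹ = (p (n + 1))⁻¹ * ((M (n + 2 + 1) ω : ℝ))⁻¹
      rw [show n + 1 + 2 = n + 2 + 1 from rfl]
    have hsmul : μ[Z (n + 1) | 𝓕 (n + 2)] =ᵐ[μ] (p (n + 1))⁻¹ • μ[f3 | 𝓕 (n + 2)] := by
      rw [hZeq]
      exact condExp_smul ((p (n + 1))⁻¹) f3 _
    show μ[Z (n + 1) | 𝓕 (n + 2)] ≤ᵐ[μ] Z n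
    have hfaceN : (0 : ℝ) < 1 - a / ((n : ℝ) + 2) := by
      have hN2 : (2 : ℝ) ≤ (n : ℝ) + 2 := by linarith [Nat.cast_nonneg (α := ℝ) n]
      have : a / ((n : ℝ) + 2) ≤ 1 / 2 := div_le_div₀ zero_le_one ha1 two_pos hN2
      linarith
    filter_upwards [hsmul, hstep] with ω h1 h2
    rw [h1, Pi.smul_apply, smul_eq_mul]
    have hppos := hp_pos (n + 1)
    calc (p (n + 1))⁻¹ * (μ[f3 | 𝓕 (n + 2)]) ω
        ≤ (p (n + 1))⁻¹ * ((1 - a / ((n : ℝ) + 2)) * f2 ω) :=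
          mul_le_mul_of_nonneg_left h2 (inv_nonneg.mpr hppos.le)
      _ = (p n)⁻¹ * (((1 - a / ((n : ℝ) + 2))⁻¹ * (1 - a / ((n : ℝ) + 2))) * f2 ω) := by
          rw [hp_succ n, mul_inv]; ring
      _ = (p n)⁻¹ * f2 ω := by rw [inv_mul_cancel₀ (ne_of_gt hfaceN), one_mul]
      _ = Z n ω := rfl
  have hadp : StronglyAdapted 𝓖 Z := fun n => ((hZmeas n).stronglyMeasurable : StronglyMeasurable[𝓖 n] (Z n))
  have hsup : Supermartingale Z 𝓖 μ := supermartingale_nat hadp hZint hkey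
  -- L¹ bound and a.e. convergence
  have hEle : ∀ n, ∫ ω, Z n ω ∂μ ≤ ∫ ω, Z 0 ω ∂μ := by
    intro n
    have h := hsup.setIntegral_le (Nat.zero_le n) (MeasurableSet.univ)
    simpa [setIntegral_univ] using h
  set R : NNReal := (∫ ω, Z 0 ω ∂μ).toNNReal with hRdef
  have hbdd : ∀ n, eLpNorm (Z n) 1 μ ≤ R := by
    intro n
    rw [eLpNorm_one_eq_lintegral_enorm, ← ofReal_integral_norm_eq_lintegral_enorm (hZint n)]
    have h1 : ∫ ω, ‖Z n ω‖ ∂μ = ∫ ω, Z n ω ∂μ := by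
      refine integral_congr_ae (ae_of_all _ fun ω => ?_)
      show ‖Z n ω‖ = Z n ω
      rw [Real.norm_eq_abs, abs_of_nonneg (hZnonneg n ω)]
    rw [h1]
    have h2 : (R : ENNReal) = ENNReal.ofReal (∫ ω, Z 0 ω ∂μ) := rfl
    rw [h2]
    exact ENNReal.ofReal_le_ofReal (hEle n)
  have hconv : ∀ᵐ ω ∂μ, ∃ c, Tendsto (fun n => (-Z) n ω) atTop (𝓝 c) :=
    hsup.neg.exists_ae_tendsto_of_bdd (R := R) fun n => by
      rw [show (-Z) n = -(Z n) from rfl, eLpNorm_neg]; exact hbdd n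
  have hval' : ∀ᵐ ω ∂μ, ∀ n : ℕ, 2 ≤ M (n + 2) ω := by
    rw [ae_all_iff]
    intro n
    exact (hval (n + 2) (by omega)).mono fun ω h => h.1
  -- conclusion
  filter_upwards [hconv, hval'] with ω hc h2M
  obtain ⟨c, hc⟩ := hc
  have hZc : Tendsto (fun n => Z n ω) atTop (𝓝 (-c)) := by
    have := hc.neg
    simpa using this
  obtain ⟨B, hB⟩ := hZc.bddAbove_range
  set B' : ℝ := max B 1 with hB'def
  have hB'1 : (1 : ℝ) ≤ B' := le_max_right _ _
  have hB'0 : (0 : ℝ) < B' := lt_of_lt_of_le one_pos hB'1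
  have hZB : ∀ n, Z n ω ≤ B' := fun n =>
    le_trans (hB (Set.mem_range_self n)) (le_max_left _ _)
  have hε : (0 : ℝ) < 2 ^ (a - γ) / (2 ^ a * B') := by
    have h1 : (0:ℝ) < 2 ^ (a - γ) := Real.rpow_pos_of_pos two_pos _
    have h2 : (0:ℝ) < 2 ^ a := Real.rpow_pos_of_pos two_pos _
    positivity
  refine lt_of_lt_of_le hε (le_ciInf fun n => ?_)
  set N : ℝ := (n : ℝ) + 2 with hNdef
  have hN2 : (2 : ℝ) ≤ N := by rw [hNdef]; linarith [Nat.cast_nonneg (α := ℝ) n]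
  have hN0 : (0 : ℝ) < N := by linarith
  set x : ℝ := (M (n + 2) ω : ℝ) with hxdef
  have hx2 : (2 : ℝ) ≤ x := by rw [hxdef]; exact_mod_cast h2M n
  have hx0 : (0 : ℝ) < x := by linarith
  -- from Z n ω ≤ B' get x⁻¹ ≤ B' * p n
  have h1 : x⁻¹ ≤ B' * p n := by
    have h := hZB n
    rw [hZdef] at h
    have hpn := hp_pos n
    calc x⁻¹ = p n * ((p n)⁻¹ * x⁻¹) := by field_simp
      _ ≤ p n * B' := mul_le_mul_of_nonneg_left h hpn.le
      _ = B' * p n := mul_comm _ _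
  have h2 : p n ≤ (2 / N) ^ a := prod_bound_aux ha0.le ha1 n
  have h3 : x⁻¹ ≤ B' * (2 ^ a / N ^ a) := by
    rw [← Real.div_rpow (by norm_num) hN0.le]
    exact h1.trans (mul_le_mul_of_nonneg_left h2 hB'0.le)
  have hNa : (0 : ℝ) < N ^ a := Real.rpow_pos_of_pos hN0 a
  have h2a : (0 : ℝ) < 2 ^ a := Real.rpow_pos_of_pos two_pos a
  have h4 : N ^ a ≤ 2 ^ a * B' * x := by
    rw [inv_eq_one_div] at h3
    have h3' : 1 / x ≤ (B' * 2 ^ a) / N ^ a := by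
      rw [← mul_div_assoc] at h3; exact h3
    have := (div_le_div_iff₀ hx0 hNa).mp h3'
    nlinarith
  have hNγ : (0 : ℝ) < N ^ γ := Real.rpow_pos_of_pos hN0 γ
  have h5 : N ^ (a - γ) = N ^ a / N ^ γ := Real.rpow_sub hN0 a γ
  have h6 : (2 : ℝ) ^ (a - γ) ≤ N ^ (a - γ) :=
    Real.rpow_le_rpow (by norm_num) hN2 (by linarith)
  have h7 : N ^ a / (2 ^ a * B') ≤ x := by
    rw [div_le_iff₀ (by positivity)]
    have hcomm : 2 ^ a * B' * x = x * (2 ^ a * B') := by ring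
    linarith [h4]
  calc (2 : ℝ) ^ (a - γ) / (2 ^ a * B') ≤ N ^ (a - γ) / (2 ^ a * B') := by gcongr
    _ = (N ^ a / N ^ γ) / (2 ^ a * B') := by rw [h5]
    _ = (N ^ a / (2 ^ a * B')) / N ^ γ := by ring
    _ ≤ x / N ^ γ := by gcongr
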